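/- arXiv:2506.22312 — 2 statements merged into one kernel-verified Lean document; each statement's English description precedes it below -/
import Mathlib

section
/- The third-order 2D smoothness indicator is indeed the claimed sum of perfect squares: for u(x,y) = u_0 + u_x L_1(x) + u_y L_1(y) + u_{xx} L_2(x) + u_{yy} L_2(y) + u_{xy} L_1(x)L_1(y), one has Σ_{|α|=1,2} ∫_{[−1/2,1/2]²} (∂^α u)² dx dy = u_x² + u_y² + (13/3)(u_{xx}² + u_{yy}²) + (7/6) u_{xy}², where the sum is over the multi-indices α ∈ {(1,0),(0,1),(2,0),(1,1),(0,2)}. -/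
lemma iquad (a b c : ℝ) :
    (∫ t in (-(1:ℝ)/2)..(1/2), (a + b*t + c*t^2)) = a + c/12 := by
  have h : ∀ t : ℝ, HasDerivAt (fun s : ℝ => a*s + b/2*s^2 + c/3*s^3) (a + b*t + c*t^2) t := by
    intro t
    have h1 := ((hasDerivAt_id t).const_mul a).add
      (((hasDerivAt_pow 2 t).const_mul (b/2)).add ((hasDerivAt_pow 3 t).const_mul (c/3)))
    convert h1 using 1
    all_goals first
    | rfl
    | (funext s; simp only [id, Pi.add_apply]; ring)
    | (push_cast; ring)
  rw [intervalIntegral.integral_eq_sub_of_hasDerivAt (fun t _ => h t)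
    (by apply Continuous.intervalIntegrable; continuity)]
  ring

lemma dquad (a b c : ℝ) (x : ℝ) : deriv (fun t : ℝ => a + b*t + c*t^2) x = b + 2*c*x := by
  have h : HasDerivAt (fun t : ℝ => a + b*t + c*t^2) (b + 2*c*x) x := by
    have h1 := ((hasDerivAt_const x a).add ((hasDerivAt_id x).const_mul b)).add
      ((hasDerivAt_pow 2 x).const_mul c)
    convert h1 using 1
    all_goals first
    | rfl
    | (funext s; simp only [id, Pi.add_apply]; ring)
    | (push_cast; ring)
  exact h.deriv

lemma dlin (a b : ℝ) (x : ℝ) : deriv (fun t : ℝ => a + b*t) x = b := by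
  have h : HasDerivAt (fun t : ℝ => a + b*t) b x := by
    have h1 := (hasDerivAt_const x a).add ((hasDerivAt_id x).const_mul b)
    convert h1 using 1
    all_goals first
    | rfl
    | (funext s; simp only [id, Pi.add_apply]; ring)
    | (push_cast; ring)
  exact h.deriv

/-- The third-order 2D smoothness indicator is a sum of perfect squares. -/
theorem stmt12 (u0 ux uy uxx uyy uxy : ℝ) :
    let L1 : ℝ → ℝ := fun t => t
    let L2 : ℝ → ℝ := fun t => t ^ 2 - 1 / 12
    let u : ℝ → ℝ → ℝ := fun x y =>
      u0 + ux * L1 x + uy * L1 y + uxx * L2 x + uyy * L2 y + uxy * L1 x * L1 y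
    (∫ x in (-(1:ℝ)/2)..(1/2), ∫ y in (-(1:ℝ)/2)..(1/2),
        (deriv (fun x' => u x' y) x) ^ 2)
    + (∫ x in (-(1:ℝ)/2)..(1/2), ∫ y in (-(1:ℝ)/2)..(1/2),
        (deriv (fun y' => u x y') y) ^ 2)
    + (∫ x in (-(1:ℝ)/2)..(1/2), ∫ y in (-(1:ℝ)/2)..(1/2),
        (deriv (fun x' => deriv (fun x'' => u x'' y) x') x) ^ 2)
    + (∫ x in (-(1:ℝ)/2)..(1/2), ∫ y in (-(1:ℝ)/2)..(1/2),
        (deriv (fun y' => deriv (fun x' => u x' y') x) y) ^ 2)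
    + (∫ x in (-(1:ℝ)/2)..(1/2), ∫ y in (-(1:ℝ)/2)..(1/2),
        (deriv (fun y' => deriv (fun y'' => u x y'') y') y) ^ 2)
    = ux ^ 2 + uy ^ 2 + (13 / 3) * (uxx ^ 2 + uyy ^ 2) + (7 / 6) * uxy ^ 2 := by
  intro L1 L2 u
  have hux : ∀ x y : ℝ, deriv (fun x' => u x' y) x = ux + uxy*y + 2*uxx*x := by
    intro x y
    have e : (fun x' => u x' y)
        = fun t : ℝ => (u0 + uy*y + uyy*(y^2 - 1/12) - uxx/12) + (ux + uxy*y)*t + uxx*t^2 := by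
      funext t; simp only [u, L1, L2]; ring
    rw [e, dquad]
  have huy : ∀ x y : ℝ, deriv (fun y' => u x y') y = uy + uxy*x + 2*uyy*y := by
    intro x y
    have e : (fun y' => u x y')
        = fun t : ℝ => (u0 + ux*x + uxx*(x^2 - 1/12) - uyy/12) + (uy + uxy*x)*t + uyy*t^2 := by
      funext t; simp only [u, L1, L2]; ring
    rw [e, dquad]
  have hdxx : ∀ x y : ℝ, deriv (fun x' => deriv (fun x'' => u x'' y) x') x = 2*uxx := by
    intro x y
    have e : (fun x' => deriv (fun x'' => u x'' y) x') = fun x' : ℝ => (ux + uxy*y) + (2*uxx)*x' := by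
      funext x'; rw [hux x' y]
    rw [e, dlin]
  have hdxy : ∀ x y : ℝ, deriv (fun y' => deriv (fun x' => u x' y') x) y = uxy := by
    intro x y
    have e : (fun y' => deriv (fun x' => u x' y') x) = fun y' : ℝ => (ux + 2*uxx*x) + uxy*y' := by
      funext y'; rw [hux x y']; ring
    rw [e, dlin]
  have hdyy : ∀ x y : ℝ, deriv (fun y' => deriv (fun y'' => u x y'') y') y = 2*uyy := by
    intro x y
    have e : (fun y' => deriv (fun y'' => u x y'') y') = fun y' : ℝ => (uy + uxy*x) + (2*uyy)*y' := by
      funext y'; rw [huy x y']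
    rw [e, dlin]
  simp only [hdxx, hdxy, hdyy]
  simp only [hux, huy]
  -- inner integrals
  have i1 : ∀ x : ℝ, (∫ y in (-(1:ℝ)/2)..(1/2), (ux + uxy*y + 2*uxx*x)^2)
      = (ux + 2*uxx*x)^2 + uxy^2/12 := by
    intro x
    rw [show (fun y : ℝ => (ux + uxy*y + 2*uxx*x)^2)
        = fun y : ℝ => (ux + 2*uxx*x)^2 + (2*(ux + 2*uxx*x)*uxy)*y + uxy^2*y^2 from by
      funext y; ring, iquad]
  have i2 : ∀ x : ℝ, (∫ y in (-(1:ℝ)/2)..(1/2), (uy + uxy*x + 2*uyy*y)^2)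
      = (uy + uxy*x)^2 + (4*uyy^2)/12 := by
    intro x
    rw [show (fun y : ℝ => (uy + uxy*x + 2*uyy*y)^2)
        = fun y : ℝ => (uy + uxy*x)^2 + (4*(uy + uxy*x)*uyy)*y + (4*uyy^2)*y^2 from by
      funext y; ring, iquad]
  have ic : ∀ c : ℝ, (∫ _ in (-(1:ℝ)/2)..(1/2), c) = c := by
    intro c; rw [intervalIntegral.integral_const]; norm_num
  simp only [i1, i2, ic]
  rw [show (fun x : ℝ => (ux + 2*uxx*x)^2 + uxy^2/12)
      = fun x : ℝ => (ux^2 + uxy^2/12) + (4*ux*uxx)*x + (4*uxx^2)*x^2 from by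
    funext x; ring, iquad]
  rw [show (fun x : ℝ => (uy + uxy*x)^2 + (4*uyy^2)/12)
      = fun x : ℝ => (uy^2 + (4*uyy^2)/12) + (2*uy*uxy)*x + uxy^2*x^2 from by
    funext x; ring, iquad]
  ring
end

section
/- The fifth-order 1D smoothness indicator derivative-integral formula: for p(x) = u_0 + u_x L_1(x) + u_{xx} L_2(x) + u_{xxx} L_3(x) + u_{xxxx} L_4(x) with L_1(x)=x, L_2(x)=x²−1/12, L_3(x)=x³−3x/20, L_4(x)=x⁴−3x²/14+3/560, one has Σ_{k=1}^{4} ∫_{−1/2}^{1/2} (p^{(k)}(x))² dx = (u_x + u_{xxx}/10)² + (13/3)(u_{xx} + (123/455) u_{xxxx})² + (781/20) u_{xxx}² + (1421461/2275) u_{xxxx}², exhibiting the smoothness indicator as a sum of perfect squares with positive coefficients. -/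
/-- Derivative of a general quartic. -/
lemma deriv_quartic (a b c d e : ℝ) :
    deriv (fun x : ℝ => a + b * x + c * x ^ 2 + d * x ^ 3 + e * x ^ 4)
      = fun x => b + (2 * c) * x + (3 * d) * x ^ 2 + (4 * e) * x ^ 3 := by
  funext x
  have H : HasDerivAt (fun x : ℝ => a + b * x + c * x ^ 2 + d * x ^ 3 + e * x ^ 4)
      (b + (2 * c) * x + (3 * d) * x ^ 2 + (4 * e) * x ^ 3) x := by
    have h0 := hasDerivAt_const x a
    have h1 := (hasDerivAt_id x).const_mul b
    have h2 := (hasDerivAt_pow 2 x).const_mul c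
    have h3 := (hasDerivAt_pow 3 x).const_mul d
    have h4 := (hasDerivAt_pow 4 x).const_mul e
    have := ((((h0.add h1).add h2).add h3).add h4)
    refine this.congr_deriv ?_
    push_cast
    ring
  exact H.deriv

/-- Integral of the square of a general quartic over [-1/2, 1/2]. -/
lemma key_integral (a b c d e : ℝ) :
    (∫ x in (-(1:ℝ)/2)..(1/2), (a + b * x + c * x ^ 2 + d * x ^ 3 + e * x ^ 4) ^ 2)
      = a ^ 2 + (b ^ 2 + 2 * a * c) / 12 + (c ^ 2 + 2 * b * d + 2 * a * e) / 80
        + (d ^ 2 + 2 * c * e) / 448 + e ^ 2 / 2304 := by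
  have h : ∀ x ∈ Set.uIcc (-(1:ℝ)/2) (1/2),
      HasDerivAt (fun x : ℝ => a ^ 2 * x ^ 1 + (a * b) * x ^ 2 + ((b ^ 2 + 2 * a * c) / 3) * x ^ 3
        + ((a * d + b * c) / 2) * x ^ 4 + ((c ^ 2 + 2 * b * d + 2 * a * e) / 5) * x ^ 5
        + ((c * d + b * e) / 3) * x ^ 6 + ((d ^ 2 + 2 * c * e) / 7) * x ^ 7
        + ((d * e) / 4) * x ^ 8 + (e ^ 2 / 9) * x ^ 9)
      ((a + b * x + c * x ^ 2 + d * x ^ 3 + e * x ^ 4) ^ 2) x := by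
    intro x _
    have H := (((((((((hasDerivAt_pow 1 x).const_mul (a ^ 2)).add
      ((hasDerivAt_pow 2 x).const_mul (a * b))).add
      ((hasDerivAt_pow 3 x).const_mul ((b ^ 2 + 2 * a * c) / 3))).add
      ((hasDerivAt_pow 4 x).const_mul ((a * d + b * c) / 2))).add
      ((hasDerivAt_pow 5 x).const_mul ((c ^ 2 + 2 * b * d + 2 * a * e) / 5))).add
      ((hasDerivAt_pow 6 x).const_mul ((c * d + b * e) / 3))).add
      ((hasDerivAt_pow 7 x).const_mul ((d ^ 2 + 2 * c * e) / 7))).add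
      ((hasDerivAt_pow 8 x).const_mul ((d * e) / 4))).add
      ((hasDerivAt_pow 9 x).const_mul (e ^ 2 / 9))
    refine H.congr_deriv ?_
    push_cast
    ring
  rw [intervalIntegral.integral_eq_sub_of_hasDerivAt h
    ((Continuous.intervalIntegrable (by fun_prop) _ _))]
  norm_num
  ring

/-- The fifth-order 1D smoothness indicator as a sum of perfect squares. -/
theorem stmt13 (u0 ux uxx uxxx uxxxx : ℝ) :
    let p : ℝ → ℝ := fun x =>
      u0 + ux * x + uxx * (x ^ 2 - 1 / 12) + uxxx * (x ^ 3 - 3 * x / 20)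
      + uxxxx * (x ^ 4 - 3 * x ^ 2 / 14 + 3 / 560)
    (∑ k ∈ Finset.Icc 1 4, ∫ x in (-(1:ℝ)/2)..(1/2), (iteratedDeriv k p x) ^ 2)
    = (ux + uxxx / 10) ^ 2 + (13 / 3) * (uxx + (123 / 455) * uxxxx) ^ 2
      + (781 / 20) * uxxx ^ 2 + (1421461 / 2275) * uxxxx ^ 2 := by
  intro p
  have hp : p = fun x => (u0 - uxx / 12 + 3 * uxxxx / 560) + (ux - 3 * uxxx / 20) * x
      + (uxx - 3 * uxxxx / 14) * x ^ 2 + uxxx * x ^ 3 + uxxxx * x ^ 4 := by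
    funext x; simp only [p]; ring
  have e1 : iteratedDeriv 1 p = fun x => (ux - 3 * uxxx / 20)
      + (2 * (uxx - 3 * uxxxx / 14)) * x + (3 * uxxx) * x ^ 2 + (4 * uxxxx) * x ^ 3
      + 0 * x ^ 4 := by
    rw [iteratedDeriv_one, hp, deriv_quartic]; funext x; ring
  have e2 : iteratedDeriv 2 p = fun x => (2 * (uxx - 3 * uxxxx / 14))
      + (6 * uxxx) * x + (12 * uxxxx) * x ^ 2 + 0 * x ^ 3 + 0 * x ^ 4 := by
    rw [iteratedDeriv_succ, e1, deriv_quartic]; funext x; ring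
  have e3 : iteratedDeriv 3 p = fun x => (6 * uxxx)
      + (24 * uxxxx) * x + 0 * x ^ 2 + 0 * x ^ 3 + 0 * x ^ 4 := by
    rw [iteratedDeriv_succ, e2, deriv_quartic]; funext x; ring
  have e4 : iteratedDeriv 4 p = fun x => (24 * uxxxx)
      + 0 * x + 0 * x ^ 2 + 0 * x ^ 3 + 0 * x ^ 4 := by
    rw [iteratedDeriv_succ, e3, deriv_quartic]; funext x; ring
  rw [show Finset.Icc 1 4 = ({1, 2, 3, 4} : Finset ℕ) from rfl]
  rw [Finset.sum_insert (by decide), Finset.sum_insert (by decide),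
    Finset.sum_insert (by decide), Finset.sum_singleton]
  rw [e1, e2, e3, e4]
  simp only [key_integral]
  ring
end
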